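/- Let λ : H → k be the distinguished algebra map with t·h = λ(h)·t for all h ∈ H. Set Q := {q ∈ A#H | (1 # h)·q = ε(h)·q for all h ∈ H}. Then the map α : A → A#H, α(a) = Σ (t₁·a) # t₂, takes values in Q, is a bijection from A onto Q whose inverse is the restriction to Q of ν̄ (where ν̄(a # h) = φ(h)·a), and for all a, b ∈ A and h ∈ H: ν̄(α(a)·(b # h)) = Σ λ(h₂)·S̄(h₁)·(ab). (Hence the Morita context built from the invariance map X : A#H → A, X(a # h) = ε(h)a, is isomorphic to the Cohen–Fischman–Montgomery Morita context.) -/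

import Mathlib

open TensorProduct

noncomputable section

variable {k H A : Type*} [CommRing k] [Ring H] [HopfAlgebra k H]
  [Ring A] [Algebra k A]

/-- For a left `H`-module structure `act` on `A`, the map `H ⊗ A → A ⊗ H`,
`h ⊗ a ↦ (h₁ · a) ⊗ h₂`, inducing the smash product. -/
def smashRH (act : H →ₗ[k] A →ₗ[k] A) : H ⊗[k] A →ₗ[k] A ⊗[k] H :=
  (TensorProduct.comm k H A).toLinearMap ∘ₗ
    LinearMap.lTensor H (TensorProduct.lift act) ∘ₗ
    (TensorProduct.assoc k H H A).toLinearMap ∘ₗ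
    LinearMap.rTensor A (TensorProduct.comm k H H).toLinearMap ∘ₗ
    LinearMap.rTensor A Coalgebra.comul

/-- The map `H ⊗ (A ⊗ H) → A ⊗ H`, `h ⊗ (b ⊗ g) ↦ (h₁ · b) ⊗ h₂ g`. -/
def hInner (act : H →ₗ[k] A →ₗ[k] A) : H ⊗[k] (A ⊗[k] H) →ₗ[k] A ⊗[k] H :=
  LinearMap.lTensor A (LinearMap.mul' k H) ∘ₗ (TensorProduct.assoc k A H H).toLinearMap ∘ₗ
    LinearMap.rTensor H (smashRH act) ∘ₗ (TensorProduct.assoc k H A H).symm.toLinearMap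

/-- The smash product multiplication on `A # H = A ⊗ H`:
`(a # h)(b # g) = a (h₁ · b) # h₂ g`, as a linear map. -/
def hMulL (act : H →ₗ[k] A →ₗ[k] A) :
    (A ⊗[k] H) ⊗[k] (A ⊗[k] H) →ₗ[k] A ⊗[k] H :=
  LinearMap.rTensor H (LinearMap.mul' k A) ∘ₗ
    (TensorProduct.assoc k A A H).symm.toLinearMap ∘ₗ
    LinearMap.lTensor A (hInner act) ∘ₗ
    (TensorProduct.assoc k A H (A ⊗[k] H)).toLinearMap

/-- The smash product multiplication `(a # h)(b # g) = a (h₁ · b) # h₂ g`. -/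
def hMul (act : H →ₗ[k] A →ₗ[k] A) (x y : A ⊗[k] H) : A ⊗[k] H :=
  hMulL act (x ⊗ₜ[k] y)

/-- The Frobenius map `ν̄ : A # H → A`, `a # h ↦ φ(h) a`. -/
def hNu (φ : H →ₗ[k] k) : A ⊗[k] H →ₗ[k] A :=
  (TensorProduct.rid k A).toLinearMap ∘ₗ LinearMap.lTensor A φ

/-- The Frobenius element `e = t₂ ⊗ S̄(t₁) ∈ H ⊗ H`. -/
def hE (Sbar : H →ₗ[k] H) (t : H) : H ⊗[k] H :=
  TensorProduct.map LinearMap.id Sbar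
    (TensorProduct.comm k H H (Coalgebra.comul t))

set_option maxHeartbeats 1000000 in
set_option synthInstance.maxHeartbeats 400000 in
theorem cfm_dummy : True := trivial

namespace CFMAux
open Coalgebra LinearMap TensorProduct

set_option maxHeartbeats 1000000
set_option synthInstance.maxHeartbeats 1000000

variable {k H A : Type*} [CommRing k] [Ring H] [HopfAlgebra k H]
  [Ring A] [Algebra k A]

lemma ccL {h : H} (r : Coalgebra.Repr k h (H × H)) :
    ∑ i ∈ r.index, Coalgebra.counit (R := k) (r.left i) • r.right i = h := by
  conv_rhs => rw [show h = (TensorProduct.lid k H) ((1:k) ⊗ₜ[k] h) by simp,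
    ← Coalgebra.sum_counit_tmul_eq r]
  rw [map_sum]
  simp only [TensorProduct.lid_tmul]

lemma ccR {h : H} (r : Coalgebra.Repr k h (H × H)) :
    ∑ i ∈ r.index, Coalgebra.counit (R := k) (r.right i) • r.left i = h := by
  conv_rhs => rw [show h = (TensorProduct.rid k H) (h ⊗ₜ[k] (1:k)) by simp,
    ← Coalgebra.sum_tmul_counit_eq r]
  rw [map_sum]
  simp only [TensorProduct.rid_tmul]

lemma hMul_tmul (act : H →ₗ[k] A →ₗ[k] A) (a b : A) (g : H) {h : H} (r : Coalgebra.Repr k h (H × H)) :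
    hMul act (a ⊗ₜ[k] h) (b ⊗ₜ[k] g) =
      ∑ i ∈ r.index, (a * act (r.left i) b) ⊗ₜ[k] (r.right i * g) := by
  simp only [hMul, hMulL, hInner, smashRH, LinearMap.comp_apply, LinearEquiv.coe_coe,
    TensorProduct.assoc_tmul, TensorProduct.assoc_symm_tmul, LinearMap.rTensor_tmul,
    LinearMap.lTensor_tmul, TensorProduct.comm_tmul]
  rw [← r.eq]
  simp only [map_sum, TensorProduct.sum_tmul, TensorProduct.tmul_sum,
    TensorProduct.assoc_tmul, LinearMap.rTensor_tmul, TensorProduct.comm_tmul,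
    TensorProduct.assoc_symm_tmul, LinearMap.lTensor_tmul, TensorProduct.lift.tmul,
    LinearMap.mul'_apply]

end CFMAux
namespace CFMAux
variable {k H A : Type*} [CommRing k] [Ring H] [HopfAlgebra k H]
  [Ring A] [Algebra k A]
open Coalgebra LinearMap TensorProduct

set_option maxHeartbeats 1000000
set_option synthInstance.maxHeartbeats 1000000

/-- key coassociativity rearrangement -/
lemma key4 :
    (TensorProduct.assoc k H H (H ⊗[k] H)).toLinearMap ∘ₗ
        TensorProduct.map (Coalgebra.comul (R := k)) (Coalgebra.comul (R := k)) ∘ₗ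
        Coalgebra.comul
      = LinearMap.lTensor H ((TensorProduct.assoc k H H H).toLinearMap ∘ₗ
          LinearMap.rTensor H (Coalgebra.comul (R := k)) ∘ₗ Coalgebra.comul) ∘ₗ
        Coalgebra.comul := by
  have e1 : TensorProduct.map (Coalgebra.comul (R := k) (A := H)) (Coalgebra.comul (R := k)) =
      LinearMap.lTensor (H ⊗[k] H) (Coalgebra.comul (R := k)) ∘ₗ
      LinearMap.rTensor H (Coalgebra.comul (R := k)) := by
    rw [LinearMap.lTensor_comp_rTensor]
  have e2 : (TensorProduct.assoc k H H (H ⊗[k] H)).toLinearMap ∘ₗ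
      LinearMap.lTensor (H ⊗[k] H) (Coalgebra.comul (R := k)) =
      LinearMap.lTensor H (LinearMap.lTensor H (Coalgebra.comul (R := k))) ∘ₗ
      (TensorProduct.assoc k H H H).toLinearMap := by
    apply TensorProduct.ext_threefold
    intro x y z
    simp
  calc (TensorProduct.assoc k H H (H ⊗[k] H)).toLinearMap ∘ₗ
        TensorProduct.map (Coalgebra.comul (R := k)) (Coalgebra.comul (R := k)) ∘ₗ
        Coalgebra.comul
      = ((TensorProduct.assoc k H H (H ⊗[k] H)).toLinearMap ∘ₗ
          LinearMap.lTensor (H ⊗[k] H) (Coalgebra.comul (R := k))) ∘ₗ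
          (LinearMap.rTensor H (Coalgebra.comul (R := k)) ∘ₗ Coalgebra.comul) := by
        rw [e1]; rfl
    _ = LinearMap.lTensor H (LinearMap.lTensor H (Coalgebra.comul (R := k))) ∘ₗ
          ((TensorProduct.assoc k H H H).toLinearMap ∘ₗ
          LinearMap.rTensor H (Coalgebra.comul (R := k)) ∘ₗ Coalgebra.comul) := by
        rw [e2]; rfl
    _ = LinearMap.lTensor H (LinearMap.lTensor H (Coalgebra.comul (R := k))) ∘ₗ
          (LinearMap.lTensor H (Coalgebra.comul (R := k)) ∘ₗ Coalgebra.comul) := by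
        rw [Coalgebra.coassoc]
    _ = LinearMap.lTensor H (LinearMap.lTensor H (Coalgebra.comul (R := k)) ∘ₗ
          Coalgebra.comul (R := k)) ∘ₗ Coalgebra.comul := by
        rw [LinearMap.lTensor_comp]; rfl
    _ = LinearMap.lTensor H ((TensorProduct.assoc k H H H).toLinearMap ∘ₗ
          LinearMap.rTensor H (Coalgebra.comul (R := k)) ∘ₗ Coalgebra.comul) ∘ₗ
        Coalgebra.comul := by
        rw [Coalgebra.coassoc]

lemma master4 {M : Type*} [AddCommGroup M] [Module k M]
    (T : H ⊗[k] (H ⊗[k] (H ⊗[k] H)) →ₗ[k] M)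
    {h : H} (r : Coalgebra.Repr k h (H × H))
    (rA : ∀ i, Coalgebra.Repr k (r.left i) (H × H)) (rB : ∀ i, Coalgebra.Repr k (r.right i) (H × H))
    (rC : ∀ i j, Coalgebra.Repr k ((rB i).left j) (H × H)) :
    ∑ i ∈ r.index, ∑ j ∈ (rA i).index, ∑ p ∈ (rB i).index,
      T ((rA i).left j ⊗ₜ[k] ((rA i).right j ⊗ₜ[k] ((rB i).left p ⊗ₜ[k] (rB i).right p)))
    = ∑ i ∈ r.index, ∑ j ∈ (rB i).index, ∑ p ∈ (rC i j).index,
      T (r.left i ⊗ₜ[k] ((rC i j).left p ⊗ₜ[k] ((rC i j).right p ⊗ₜ[k] (rB i).right j))) := by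
  have hL : ∑ i ∈ r.index, ∑ j ∈ (rA i).index, ∑ p ∈ (rB i).index,
      T ((rA i).left j ⊗ₜ[k] ((rA i).right j ⊗ₜ[k] ((rB i).left p ⊗ₜ[k] (rB i).right p)))
      = T (((TensorProduct.assoc k H H (H ⊗[k] H)).toLinearMap ∘ₗ
        TensorProduct.map (Coalgebra.comul (R := k)) (Coalgebra.comul (R := k)) ∘ₗ
        Coalgebra.comul) h) := by
    simp only [LinearMap.comp_apply, LinearEquiv.coe_coe, ← r.eq, map_sum]
    refine Finset.sum_congr rfl (fun i _ => ?_)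
    rw [TensorProduct.map_tmul, ← (rA i).eq, ← (rB i).eq, TensorProduct.sum_tmul]
    simp only [map_sum, TensorProduct.tmul_sum, TensorProduct.assoc_tmul]
  have hR : ∑ i ∈ r.index, ∑ j ∈ (rB i).index, ∑ p ∈ (rC i j).index,
      T (r.left i ⊗ₜ[k] ((rC i j).left p ⊗ₜ[k] ((rC i j).right p ⊗ₜ[k] (rB i).right j)))
      = T ((LinearMap.lTensor H ((TensorProduct.assoc k H H H).toLinearMap ∘ₗ
          LinearMap.rTensor H (Coalgebra.comul (R := k)) ∘ₗ Coalgebra.comul) ∘ₗ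
          Coalgebra.comul) h) := by
    simp only [LinearMap.comp_apply, ← r.eq, map_sum]
    refine Finset.sum_congr rfl (fun i _ => ?_)
    rw [LinearMap.lTensor_tmul]
    simp only [LinearMap.comp_apply, LinearEquiv.coe_coe]
    rw [← (rB i).eq]
    simp only [map_sum, TensorProduct.tmul_sum]
    refine Finset.sum_congr rfl (fun j _ => ?_)
    rw [LinearMap.rTensor_tmul, ← (rC i j).eq, TensorProduct.sum_tmul]
    simp only [map_sum, TensorProduct.assoc_tmul, TensorProduct.tmul_sum]
  rw [hL, hR, key4]
end CFMAux
namespace CFMAux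
variable {k H A : Type*} [CommRing k] [Ring H] [HopfAlgebra k H]
  [Ring A] [Algebra k A]
open Coalgebra LinearMap TensorProduct

set_option maxHeartbeats 1000000
set_option synthInstance.maxHeartbeats 1000000

variable {B : Type*} [Ring B] [Algebra k B]

/-- convolution product on `Hom(H, B)` -/
def conv (f g : H →ₗ[k] B) : H →ₗ[k] B :=
  LinearMap.mul' k B ∘ₗ TensorProduct.map f g ∘ₗ Coalgebra.comul

lemma conv_apply (f g : H →ₗ[k] B) {h : H} (r : Coalgebra.Repr k h (H × H)) :
    conv f g h = ∑ i ∈ r.index, f (r.left i) * g (r.right i) := by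
  simp only [conv, LinearMap.comp_apply, ← r.eq, map_sum, TensorProduct.map_tmul,
    LinearMap.mul'_apply]

/-- convolution unit -/
def cunit : H →ₗ[k] B := Algebra.linearMap k B ∘ₗ Coalgebra.counit

lemma cunit_apply (h : H) :
    (cunit (k := k) (H := H) (B := B)) h = Coalgebra.counit (R := k) h • (1 : B) := by
  simp [cunit, Algebra.algebraMap_eq_smul_one]

lemma conv_cunit_left (f : H →ₗ[k] B) : conv cunit f = f := by
  ext h
  rw [conv_apply _ _ (Coalgebra.Repr.arbitrary k h)]
  simp only [cunit_apply, smul_mul_assoc, one_mul, ← map_smul, ← map_sum]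
  rw [ccL]

lemma conv_cunit_right (f : H →ₗ[k] B) : conv f cunit = f := by
  ext h
  rw [conv_apply _ _ (Coalgebra.Repr.arbitrary k h)]
  simp only [cunit_apply, mul_smul_comm, mul_one, ← map_smul, ← map_sum]
  rw [ccR]

lemma conv_assoc (f g j : H →ₗ[k] B) : conv (conv f g) j = conv f (conv g j) := by
  ext h
  set r := Coalgebra.Repr.arbitrary k h
  have X := Coalgebra.sum_tmul_tmul_eq r (fun i => Coalgebra.Repr.arbitrary k (r.left i))
    (fun i => Coalgebra.Repr.arbitrary k (r.right i))
  apply_fun (LinearMap.mul' k B ∘ₗ LinearMap.lTensor B (LinearMap.mul' k B) ∘ₗ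
    TensorProduct.map f (TensorProduct.map g j)) at X
  simp only [map_sum, LinearMap.comp_apply, TensorProduct.map_tmul,
    LinearMap.lTensor_tmul, LinearMap.mul'_apply] at X
  rw [conv_apply _ _ r, conv_apply _ _ r]
  calc ∑ i ∈ r.index, conv f g (r.left i) * j (r.right i)
      = ∑ i ∈ r.index, ∑ jj ∈ (Coalgebra.Repr.arbitrary k (r.left i)).index,
          f ((Coalgebra.Repr.arbitrary k (r.left i)).left jj) *
          (g ((Coalgebra.Repr.arbitrary k (r.left i)).right jj) * j (r.right i)) := by
        refine Finset.sum_congr rfl (fun i _ => ?_)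
        rw [conv_apply f g (Coalgebra.Repr.arbitrary k (r.left i)), Finset.sum_mul]
        simp only [mul_assoc]
    _ = ∑ i ∈ r.index, f (r.left i) * conv g j (r.right i) := by
        rw [X]
        refine Finset.sum_congr rfl (fun i _ => ?_)
        rw [conv_apply g j (Coalgebra.Repr.arbitrary k (r.right i)), Finset.mul_sum]

lemma counit_antipode (h : H) :
    Coalgebra.counit (R := k) (HopfAlgebra.antipode (R := k) h) = Coalgebra.counit (R := k) h := by
  set r := Coalgebra.Repr.arbitrary k h
  have X := HopfAlgebra.sum_antipode_mul_eq_smul r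
  apply_fun (Coalgebra.counit (R := k)) at X
  simp only [map_sum, Bialgebra.counit_mul, map_smul, Bialgebra.counit_one, smul_eq_mul,
    mul_one] at X
  calc Coalgebra.counit (R := k) (HopfAlgebra.antipode (R := k) h)
      = Coalgebra.counit (R := k) (HopfAlgebra.antipode (R := k)
          (∑ i ∈ r.index, Coalgebra.counit (R := k) (r.right i) • r.left i)) := by rw [ccR]
    _ = ∑ i ∈ r.index, Coalgebra.counit (R := k) (HopfAlgebra.antipode (R := k) (r.left i)) *
          Coalgebra.counit (R := k) (r.right i) := by
        simp only [map_sum, map_smul, smul_eq_mul]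
        exact Finset.sum_congr rfl (fun i _ => mul_comm _ _)
    _ = Coalgebra.counit (R := k) h := X

end CFMAux
namespace CFMAux
variable {k H A : Type*} [CommRing k] [Ring H] [HopfAlgebra k H]
  [Ring A] [Algebra k A]
open Coalgebra LinearMap TensorProduct

set_option maxHeartbeats 1600000
set_option synthInstance.maxHeartbeats 1000000

lemma antipode_comul' (h : H) :
    Coalgebra.comul (R := k) (HopfAlgebra.antipode (R := k) h)
      = TensorProduct.map (HopfAlgebra.antipode (R := k)) (HopfAlgebra.antipode (R := k))
          ((TensorProduct.comm k H H) (Coalgebra.comul (R := k) h)) := by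
  set S : H →ₗ[k] H := HopfAlgebra.antipode (R := k) with hS
  set F : H →ₗ[k] H ⊗[k] H := Coalgebra.comul ∘ₗ S with hF
  set G : H →ₗ[k] H ⊗[k] H := TensorProduct.map S S ∘ₗ
    (TensorProduct.comm k H H).toLinearMap ∘ₗ Coalgebra.comul with hG
  have hFM : conv F (Coalgebra.comul (R := k) (A := H)) = cunit := by
    ext x
    rw [conv_apply _ _ (Coalgebra.Repr.arbitrary k x), cunit_apply]
    simp only [hF, LinearMap.comp_apply, ← Bialgebra.comul_mul, ← map_sum]
    rw [HopfAlgebra.sum_antipode_mul_eq_smul (Coalgebra.Repr.arbitrary k x), map_smul,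
      Bialgebra.comul_one]
  have hMG : conv (Coalgebra.comul (R := k) (A := H)) G = cunit := by
    ext x
    set r := Coalgebra.Repr.arbitrary k x with hr
    set rA : ∀ i, Coalgebra.Repr k (r.left i) (H × H) := fun i => Coalgebra.Repr.arbitrary k (r.left i)
      with hrA
    set rB : ∀ i, Coalgebra.Repr k (r.right i) (H × H) := fun i => Coalgebra.Repr.arbitrary k (r.right i)
      with hrB
    set rC : ∀ i j, Coalgebra.Repr k ((rB i).left j) (H × H) :=
      fun i j => Coalgebra.Repr.arbitrary k ((rB i).left j) with hrC
    rw [conv_apply _ _ r, cunit_apply]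
    have key := master4 (k := k)
      (TensorProduct.map (LinearMap.mul' k H) (LinearMap.mul' k H) ∘ₗ
        (TensorProduct.assoc k H H (H ⊗[k] H)).symm.toLinearMap ∘ₗ
        LinearMap.lTensor H
          (TensorProduct.map S (LinearMap.lTensor H S) ∘ₗ
            (TensorProduct.comm k (H ⊗[k] H) H).toLinearMap ∘ₗ
            (TensorProduct.assoc k H H H).symm.toLinearMap))
      r rA rB rC
    simp only [LinearMap.comp_apply, LinearEquiv.coe_coe, TensorProduct.assoc_symm_tmul,
      TensorProduct.comm_tmul, TensorProduct.map_tmul, LinearMap.lTensor_tmul,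
      LinearMap.mul'_apply] at key
    have step1 : ∀ i ∈ r.index,
        Coalgebra.comul (R := k) (r.left i) * G (r.right i)
        = ∑ j ∈ (rA i).index, ∑ p ∈ (rB i).index,
            ((rA i).left j * S ((rB i).right p)) ⊗ₜ[k] ((rA i).right j * S ((rB i).left p)) := by
      intro i _
      rw [hG]
      simp only [LinearMap.comp_apply, LinearEquiv.coe_coe]
      rw [← (rA i).eq, ← (rB i).eq]
      simp only [map_sum, TensorProduct.comm_tmul, TensorProduct.map_tmul]
      rw [Finset.sum_mul_sum]
      simp only [Algebra.TensorProduct.tmul_mul_tmul]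
    rw [Finset.sum_congr rfl step1, key]
    calc ∑ i ∈ r.index, ∑ j ∈ (rB i).index, ∑ p ∈ (rC i j).index,
          (r.left i * S ((rB i).right j)) ⊗ₜ[k] ((rC i j).left p * S ((rC i j).right p))
        = ∑ i ∈ r.index, ∑ j ∈ (rB i).index,
            Coalgebra.counit (R := k) ((rB i).left j) •
              ((r.left i * S ((rB i).right j)) ⊗ₜ[k] (1 : H)) := by
          refine Finset.sum_congr rfl fun i _ => Finset.sum_congr rfl fun j _ => ?_
          rw [← TensorProduct.tmul_sum, HopfAlgebra.sum_mul_antipode_eq_smul (rC i j),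
            TensorProduct.tmul_smul]
      _ = ∑ i ∈ r.index, (r.left i * S (r.right i)) ⊗ₜ[k] (1 : H) := by
          refine Finset.sum_congr rfl fun i _ => ?_
          have : ∀ j ∈ (rB i).index,
              Coalgebra.counit (R := k) ((rB i).left j) •
                ((r.left i * S ((rB i).right j)) ⊗ₜ[k] (1 : H))
              = (r.left i * S (Coalgebra.counit (R := k) ((rB i).left j) • (rB i).right j))
                  ⊗ₜ[k] (1 : H) := by
            intro j _
            rw [map_smul, mul_smul_comm, TensorProduct.smul_tmul']
          rw [Finset.sum_congr rfl this, ← TensorProduct.sum_tmul, ← Finset.mul_sum,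
            ← map_sum, ccL]
      _ = (∑ i ∈ r.index, r.left i * S (r.right i)) ⊗ₜ[k] (1 : H) := by
          rw [TensorProduct.sum_tmul]
      _ = Coalgebra.counit (R := k) x • (1 : H ⊗[k] H) := by
          rw [HopfAlgebra.sum_mul_antipode_eq_smul r, Algebra.TensorProduct.one_def]
          exact TensorProduct.smul_tmul' _ _ _
  have hGF : G = F := by
    calc G = conv cunit G := (conv_cunit_left G).symm
      _ = conv (conv F Coalgebra.comul) G := by rw [hFM]
      _ = conv F (conv Coalgebra.comul G) := conv_assoc _ _ _
      _ = conv F cunit := by rw [hMG]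
      _ = F := conv_cunit_right F
  have := congrFun (congrArg DFunLike.coe hGF.symm) h
  simpa [hF, hG] using this

lemma antipode_comul {h : H} (r : Coalgebra.Repr k h (H × H)) :
    Coalgebra.comul (R := k) (HopfAlgebra.antipode (R := k) h)
      = ∑ i ∈ r.index, HopfAlgebra.antipode (R := k) (r.right i) ⊗ₜ[k]
          HopfAlgebra.antipode (R := k) (r.left i) := by
  rw [antipode_comul' h, ← r.eq]
  simp [map_sum]

end CFMAux
namespace CFMAux
variable {k H A : Type*} [CommRing k] [Ring H] [HopfAlgebra k H]
  [Ring A] [Algebra k A]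
open Coalgebra LinearMap TensorProduct

set_option maxHeartbeats 1600000
set_option synthInstance.maxHeartbeats 1000000

variable (Sbar : H →ₗ[k] H)

lemma counit_sbar (hS2 : ∀ h : H, HopfAlgebra.antipode (R := k) (Sbar h) = h) (g : H) :
    Coalgebra.counit (R := k) (Sbar g) = Coalgebra.counit (R := k) g := by
  conv_rhs => rw [← hS2 g, counit_antipode]

lemma sbar_comul (hS1 : ∀ h : H, Sbar (HopfAlgebra.antipode (R := k) h) = h)
    (hS2 : ∀ h : H, HopfAlgebra.antipode (R := k) (Sbar h) = h) {g : H}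
    (r : Coalgebra.Repr k g (H × H)) :
    Coalgebra.comul (R := k) (Sbar g)
      = ∑ i ∈ r.index, Sbar (r.right i) ⊗ₜ[k] Sbar (r.left i) := by
  set rs := Coalgebra.Repr.arbitrary k (Sbar g) with hrs
  have h1 : Coalgebra.comul (R := k) g = ∑ i ∈ rs.index,
      HopfAlgebra.antipode (R := k) (rs.right i) ⊗ₜ[k]
        HopfAlgebra.antipode (R := k) (rs.left i) := by
    conv_lhs => rw [← hS2 g]
    exact antipode_comul rs
  have h2 := congrArg (fun z => (TensorProduct.comm k H H) (TensorProduct.map Sbar Sbar z)) h1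
  simp only [map_sum, TensorProduct.map_tmul, TensorProduct.comm_tmul, hS1] at h2
  rw [rs.eq] at h2
  rw [← h2, ← r.eq]
  simp only [map_sum, TensorProduct.map_tmul, TensorProduct.comm_tmul]

lemma sbar_collapse (hS1 : ∀ h : H, Sbar (HopfAlgebra.antipode (R := k) h) = h)
    (hS2 : ∀ h : H, HopfAlgebra.antipode (R := k) (Sbar h) = h) {g : H}
    (r : Coalgebra.Repr k g (H × H)) :
    ∑ i ∈ r.index, r.right i * Sbar (r.left i) = Coalgebra.counit (R := k) g • (1 : H) := by
  have X := HopfAlgebra.sum_antipode_mul_eq_smul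
    (R := k) (⟨r.index, fun i => Sbar (r.right i), fun i => Sbar (r.left i),
      (sbar_comul Sbar hS1 hS2 r).symm⟩ : Coalgebra.Repr k (Sbar g) (H × H))
  simp only [hS2] at X
  rw [counit_sbar Sbar hS2] at X
  exact X

lemma hNu_tmul (φ : H →ₗ[k] k) (c : A) (g : H) : hNu φ (c ⊗ₜ[k] g) = φ g • c := by
  simp [hNu]

lemma hMul_right_sum (act : H →ₗ[k] A →ₗ[k] A) (x : A ⊗[k] H) {ι : Type*} (s : Finset ι)
    (f : ι → A ⊗[k] H) :
    hMul act x (∑ i ∈ s, f i) = ∑ i ∈ s, hMul act x (f i) := by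
  simp [hMul, TensorProduct.tmul_sum, map_sum]

lemma hMul_right_smul (act : H →ₗ[k] A →ₗ[k] A) (x : A ⊗[k] H) (c : k) (y : A ⊗[k] H) :
    hMul act x (c • y) = c • hMul act x (y) := by
  simp [hMul, TensorProduct.tmul_smul]

lemma hMul_right_add (act : H →ₗ[k] A →ₗ[k] A) (x y z : A ⊗[k] H) :
    hMul act x (y + z) = hMul act x y + hMul act x z := by
  simp [hMul, TensorProduct.tmul_add]

lemma hE_eq (t : H) (r : Coalgebra.Repr k t (H × H)) :
    hE Sbar t = ∑ i ∈ r.index, r.right i ⊗ₜ[k] Sbar (r.left i) := by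
  rw [hE, ← r.eq]
  simp [map_sum]

lemma hphi_elem (φ : H →ₗ[k] k) {h : H} (r : Coalgebra.Repr k h (H × H))
    (hyp : TensorProduct.rid k H (LinearMap.lTensor H φ (Coalgebra.comul h)) = φ h • (1 : H)) :
    ∑ i ∈ r.index, φ (r.right i) • r.left i = φ h • (1 : H) := by
  rw [← hyp, ← r.eq]
  simp [map_sum]

lemma star_id (φ : H →ₗ[k] k) (t : H) (r : Coalgebra.Repr k t (H × H))
    (hfr1 : ∀ h : H, LinearMap.rTensor H (LinearMap.mulLeft k h) (hE Sbar t) =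
      LinearMap.lTensor H (LinearMap.mulRight k h) (hE Sbar t))
    (hfr3 : TensorProduct.rid k H (LinearMap.lTensor H φ (hE Sbar t)) = 1) (m : H) :
    ∑ i ∈ r.index, φ (Sbar (r.left i) * m) • r.right i = m := by
  have e1 := hfr1 m
  rw [hE_eq Sbar t r] at e1
  simp only [map_sum, LinearMap.rTensor_tmul, LinearMap.lTensor_tmul,
    LinearMap.mulLeft_apply, LinearMap.mulRight_apply] at e1
  have e2 := congrArg (fun z => TensorProduct.rid k H (LinearMap.lTensor H φ z)) e1
  simp only [map_sum, LinearMap.lTensor_tmul, TensorProduct.rid_tmul] at e2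
  have e4 := hfr3
  rw [hE_eq Sbar t r] at e4
  simp only [map_sum, LinearMap.lTensor_tmul, TensorProduct.rid_tmul] at e4
  have e3 : ∑ i ∈ r.index, φ (Sbar (r.left i)) • (m * r.right i) = m := by
    calc ∑ i ∈ r.index, φ (Sbar (r.left i)) • (m * r.right i)
        = m * ∑ i ∈ r.index, φ (Sbar (r.left i)) • r.right i := by
          rw [Finset.mul_sum]
          exact Finset.sum_congr rfl fun i _ => (mul_smul_comm _ _ _).symm
      _ = m := by rw [e4, mul_one]
  rw [← e2, e3]

end CFMAux
namespace CFMAux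
variable {k H A : Type*} [CommRing k] [Ring H] [HopfAlgebra k H]
  [Ring A] [Algebra k A]
open Coalgebra LinearMap TensorProduct

set_option maxHeartbeats 1600000
set_option synthInstance.maxHeartbeats 1000000

lemma part1 (act : H →ₗ[k] A →ₗ[k] A)
    (hact2 : ∀ (g h : H) (a : A), act (g * h) a = act g (act h a))
    {t : H} (h : H) (hth : h * t = Coalgebra.counit (R := k) h • t) (a : A) :
    hMul act ((1:A) ⊗ₜ[k] h) (LinearMap.rTensor H (act.flip a) (Coalgebra.comul t))
      = Coalgebra.counit (R := k) h •
        LinearMap.rTensor H (act.flip a) (Coalgebra.comul t) := by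
  set r := Coalgebra.Repr.arbitrary k t with hrdef
  set rh := Coalgebra.Repr.arbitrary k h with hrhdef
  have eq1 : Coalgebra.comul (R := k) h * Coalgebra.comul (R := k) t
      = Coalgebra.counit (R := k) h • Coalgebra.comul (R := k) t := by
    rw [← Bialgebra.comul_mul, hth, map_smul]
  have lhs1 : hMul act ((1:A) ⊗ₜ[k] h) (LinearMap.rTensor H (act.flip a) (Coalgebra.comul t))
      = LinearMap.rTensor H (act.flip a)
          (Coalgebra.comul (R := k) h * Coalgebra.comul (R := k) t) := by
    conv_lhs => rw [← r.eq]
    rw [map_sum, hMul_right_sum]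
    simp only [LinearMap.rTensor_tmul, LinearMap.flip_apply]
    rw [Finset.sum_congr rfl (fun i _ => hMul_tmul act 1 (act (r.left i) a) (r.right i) rh)]
    conv_rhs => rw [← rh.eq, ← r.eq, Finset.sum_mul_sum]
    simp only [Algebra.TensorProduct.tmul_mul_tmul, map_sum, LinearMap.rTensor_tmul,
      LinearMap.flip_apply, one_mul, hact2]
    exact Finset.sum_comm
  rw [lhs1, eq1, map_smul]

lemma part2 (act : H →ₗ[k] A →ₗ[k] A) (hact1 : ∀ a : A, act 1 a = a)
    (φ : H →ₗ[k] k) (t : H) (hφt : φ t = 1)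
    (hyp : TensorProduct.rid k H (LinearMap.lTensor H φ (Coalgebra.comul t)) = φ t • (1 : H))
    (a : A) :
    hNu φ (LinearMap.rTensor H (act.flip a) (Coalgebra.comul t)) = a := by
  set r := Coalgebra.Repr.arbitrary k t with hrdef
  conv_lhs => rw [← r.eq]
  rw [map_sum, map_sum]
  simp only [LinearMap.rTensor_tmul, LinearMap.flip_apply, hNu_tmul]
  have e : ∑ i ∈ r.index, φ (r.right i) • act (r.left i) a
      = act (∑ i ∈ r.index, φ (r.right i) • r.left i) a := by
    rw [map_sum, LinearMap.sum_apply]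
    exact Finset.sum_congr rfl fun i _ => by rw [map_smul, LinearMap.smul_apply]
  rw [e, hphi_elem φ r hyp, hφt, one_smul, hact1]

lemma lam_elem (φ : H →ₗ[k] k) (t : H) (lam : H →ₐ[k] k) (hφt : φ t = 1)
    (hyp : TensorProduct.rid k H (LinearMap.lTensor H φ (Coalgebra.comul t)) = φ t • (1 : H))
    (hlam : ∀ h : H, t * h = lam h • t) (g : H)
    (rt : Coalgebra.Repr k t (H × H)) (rg : Coalgebra.Repr k g (H × H)) :
    ∑ i ∈ rt.index, ∑ j ∈ rg.index,
        φ (rt.right i * rg.right j) • (rt.left i * rg.left j) = lam g • (1 : H) := by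
  have e1 : Coalgebra.comul (R := k) (t * g) = lam g • Coalgebra.comul (R := k) t := by
    rw [hlam, map_smul]
  have e2 : Coalgebra.comul (R := k) (t * g) = ∑ i ∈ rt.index, ∑ j ∈ rg.index,
      (rt.left i * rg.left j) ⊗ₜ[k] (rt.right i * rg.right j) := by
    rw [Bialgebra.comul_mul, ← rt.eq, ← rg.eq, Finset.sum_mul_sum]
    simp only [Algebra.TensorProduct.tmul_mul_tmul]
  have e3 := congrArg (fun z => TensorProduct.rid k H (LinearMap.lTensor H φ z))
    (e2.symm.trans e1)
  simp only [map_sum, map_smul, LinearMap.lTensor_tmul, TensorProduct.rid_tmul] at e3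
  rw [e3, hyp, hφt, one_smul]
end CFMAux
namespace CFMAux
variable {k H A : Type*} [CommRing k] [Ring H] [HopfAlgebra k H]
  [Ring A] [Algebra k A]
open Coalgebra LinearMap TensorProduct

set_option maxHeartbeats 1600000
set_option synthInstance.maxHeartbeats 1000000

lemma six_b (Sbar : H →ₗ[k] H)
    (hS1 : ∀ h : H, Sbar (HopfAlgebra.antipode (R := k) h) = h)
    (hS2 : ∀ h : H, HopfAlgebra.antipode (R := k) (Sbar h) = h)
    (φ : H →ₗ[k] k) (t : H) (lam : H →ₐ[k] k) (hφt : φ t = 1)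
    (hyp : TensorProduct.rid k H (LinearMap.lTensor H φ (Coalgebra.comul t)) = φ t • (1 : H))
    (hlam : ∀ h : H, t * h = lam h • t) (h : H)
    (rt : Coalgebra.Repr k t (H × H)) (rh : Coalgebra.Repr k h (H × H)) :
    ∑ i ∈ rt.index, φ (rt.right i * h) • rt.left i
      = ∑ j ∈ rh.index, lam (rh.right j) • Sbar (rh.left j) := by
  set rA : ∀ j, Coalgebra.Repr k (rh.left j) (H × H) := fun j => Coalgebra.Repr.arbitrary k (rh.left j)
    with hrA
  set rD : ∀ j, Coalgebra.Repr k (rh.right j) (H × H) := fun j => Coalgebra.Repr.arbitrary k (rh.right j)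
    with hrD
  have rhs1 : ∀ j ∈ rh.index, lam (rh.right j) • Sbar (rh.left j)
      = ∑ m ∈ (rD j).index, ∑ i ∈ rt.index,
          φ (rt.right i * (rD j).right m) •
            (rt.left i * ((rD j).left m * Sbar (rh.left j))) := by
    intro j _
    calc lam (rh.right j) • Sbar (rh.left j)
        = (lam (rh.right j) • (1:H)) * Sbar (rh.left j) := by rw [smul_mul_assoc, one_mul]
      _ = (∑ i ∈ rt.index, ∑ m ∈ (rD j).index,
            φ (rt.right i * (rD j).right m) • (rt.left i * (rD j).left m)) *
            Sbar (rh.left j) := by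
          rw [lam_elem φ t lam hφt hyp hlam (rh.right j) rt (rD j)]
      _ = ∑ i ∈ rt.index, ∑ m ∈ (rD j).index,
            φ (rt.right i * (rD j).right m) •
              (rt.left i * ((rD j).left m * Sbar (rh.left j))) := by
          rw [Finset.sum_mul]
          refine Finset.sum_congr rfl fun i _ => ?_
          rw [Finset.sum_mul]
          refine Finset.sum_congr rfl fun m _ => ?_
          rw [smul_mul_assoc, mul_assoc]
      _ = ∑ m ∈ (rD j).index, ∑ i ∈ rt.index,
            φ (rt.right i * (rD j).right m) •
              (rt.left i * ((rD j).left m * Sbar (rh.left j))) := Finset.sum_comm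
  have X := Coalgebra.sum_tmul_tmul_eq rh rA rD
  set U : H ⊗[k] (H ⊗[k] H) →ₗ[k] H :=
    (TensorProduct.rid k H).toLinearMap ∘ₗ LinearMap.lTensor H φ ∘ₗ
      LinearMap.mulLeft k (Coalgebra.comul (R := k) t) ∘ₗ
      LinearMap.rTensor H (LinearMap.mul' k H ∘ₗ (TensorProduct.comm k H H).toLinearMap ∘ₗ
        LinearMap.rTensor H Sbar) ∘ₗ (TensorProduct.assoc k H H H).symm.toLinearMap with hU
  have hUval : ∀ x y z : H, U (x ⊗ₜ[k] (y ⊗ₜ[k] z))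
      = ∑ i ∈ rt.index, φ (rt.right i * z) • (rt.left i * (y * Sbar x)) := by
    intro x y z
    rw [hU]
    simp only [LinearMap.comp_apply, LinearEquiv.coe_coe, TensorProduct.assoc_symm_tmul,
      LinearMap.rTensor_tmul, TensorProduct.comm_tmul, LinearMap.mul'_apply,
      LinearMap.mulLeft_apply]
    rw [← rt.eq, Finset.sum_mul]
    simp only [Algebra.TensorProduct.tmul_mul_tmul, map_sum, LinearMap.lTensor_tmul,
      TensorProduct.rid_tmul]
  have XU := congrArg U X
  simp only [map_sum, hUval] at XU
  -- collapse the left-hand side of XU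
  have lhs2 : ∀ j ∈ rh.index,
      (∑ m ∈ (rA j).index, ∑ i ∈ rt.index,
        φ (rt.right i * rh.right j) •
          (rt.left i * ((rA j).right m * Sbar ((rA j).left m))))
      = ∑ i ∈ rt.index, Coalgebra.counit (R := k) (rh.left j) •
          (φ (rt.right i * rh.right j) • rt.left i) := by
    intro j _
    rw [Finset.sum_comm]
    refine Finset.sum_congr rfl fun i _ => ?_
    rw [← Finset.smul_sum, ← Finset.mul_sum, sbar_collapse Sbar hS1 hS2 (rA j),
      mul_smul_comm, mul_one, smul_comm]
  rw [Finset.sum_congr rfl rhs1, ← XU, Finset.sum_congr rfl lhs2, Finset.sum_comm]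
  refine Finset.sum_congr rfl fun i _ => ?_
  have : ∀ j ∈ rh.index, Coalgebra.counit (R := k) (rh.left j) •
      (φ (rt.right i * rh.right j) • rt.left i)
      = φ (rt.right i * (Coalgebra.counit (R := k) (rh.left j) • rh.right j)) • rt.left i := by
    intro j _
    rw [mul_smul_comm, map_smul, smul_smul, smul_eq_mul]
  rw [Finset.sum_congr rfl this, ← Finset.sum_smul]
  congr 1
  rw [← map_sum, ← Finset.mul_sum, ccL]
end CFMAux
namespace CFMAux
variable {k H A : Type*} [CommRing k] [Ring H] [HopfAlgebra k H]
  [Ring A] [Algebra k A]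
open Coalgebra LinearMap TensorProduct

set_option maxHeartbeats 1600000
set_option synthInstance.maxHeartbeats 1000000

lemma hMul_left_sum (act : H →ₗ[k] A →ₗ[k] A) {ι : Type*} (s : Finset ι)
    (f : ι → A ⊗[k] H) (y : A ⊗[k] H) :
    hMul act (∑ i ∈ s, f i) y = ∑ i ∈ s, hMul act (f i) y := by
  simp [hMul, TensorProduct.sum_tmul, map_sum]

lemma act_sum_smul (act : H →ₗ[k] A →ₗ[k] A) {ι : Type*} (s : Finset ι)
    (c : ι → k) (g : ι → H) (a : A) :
    act (∑ i ∈ s, c i • g i) a = ∑ i ∈ s, c i • act (g i) a := by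
  rw [map_sum, LinearMap.sum_apply]
  exact Finset.sum_congr rfl fun i _ => by rw [map_smul, LinearMap.smul_apply]

lemma part6 (act : H →ₗ[k] A →ₗ[k] A)
    (hactmul : ∀ (h : H) (a b : A), act h (a * b) =
      LinearMap.mul' k A (TensorProduct.map (act.flip a) (act.flip b) (Coalgebra.comul h)))
    (Sbar : H →ₗ[k] H)
    (hS1 : ∀ h : H, Sbar (HopfAlgebra.antipode (R := k) h) = h)
    (hS2 : ∀ h : H, HopfAlgebra.antipode (R := k) (Sbar h) = h)
    (φ : H →ₗ[k] k) (t : H) (lam : H →ₐ[k] k) (hφt : φ t = 1)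
    (hyp : TensorProduct.rid k H (LinearMap.lTensor H φ (Coalgebra.comul t)) = φ t • (1 : H))
    (hlam : ∀ h : H, t * h = lam h • t) (a b : A) (h : H) :
    hNu φ (hMul act (LinearMap.rTensor H (act.flip a) (Coalgebra.comul t)) (b ⊗ₜ[k] h))
      = TensorProduct.rid k A (TensorProduct.map (act.flip (a * b) ∘ₗ Sbar) lam.toLinearMap
          (Coalgebra.comul h)) := by
  set rt := Coalgebra.Repr.arbitrary k t with hrt
  set rtA : ∀ i, Coalgebra.Repr k (rt.left i) (H × H) := fun i => Coalgebra.Repr.arbitrary k (rt.left i)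
    with hrtA
  set rtB : ∀ i, Coalgebra.Repr k (rt.right i) (H × H) := fun i => Coalgebra.Repr.arbitrary k (rt.right i)
    with hrtB
  set rh := Coalgebra.Repr.arbitrary k h with hrh
  have lhs1 : hNu φ (hMul act (LinearMap.rTensor H (act.flip a) (Coalgebra.comul t)) (b ⊗ₜ[k] h))
      = ∑ i ∈ rt.index, ∑ p ∈ (rtB i).index,
          φ ((rtB i).right p * h) • (act (rt.left i) a * act ((rtB i).left p) b) := by
    conv_lhs => rw [← rt.eq]
    rw [map_sum, hMul_left_sum, map_sum]
    refine Finset.sum_congr rfl fun i _ => ?_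
    rw [LinearMap.rTensor_tmul, LinearMap.flip_apply,
      hMul_tmul act (act (rt.left i) a) b h (rtB i), map_sum]
    exact Finset.sum_congr rfl fun p _ => by rw [hNu_tmul]
  have X := Coalgebra.sum_tmul_tmul_eq rt rtA rtB
  set T6 : H ⊗[k] (H ⊗[k] H) →ₗ[k] A :=
    LinearMap.mul' k A ∘ₗ LinearMap.lTensor A (TensorProduct.rid k A).toLinearMap ∘ₗ
      TensorProduct.map (act.flip a)
        (TensorProduct.map (act.flip b) (φ ∘ₗ LinearMap.mulRight k h)) with hT6
  have hT6val : ∀ x y z : H, T6 (x ⊗ₜ[k] (y ⊗ₜ[k] z)) = φ (z * h) • (act x a * act y b) := by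
    intro x y z
    rw [hT6]
    simp only [LinearMap.comp_apply, LinearEquiv.coe_coe, TensorProduct.map_tmul,
      LinearMap.lTensor_tmul, TensorProduct.rid_tmul, LinearMap.mul'_apply,
      LinearMap.mulRight_apply, LinearMap.flip_apply, mul_smul_comm]
  have XT := congrArg T6 X
  simp only [map_sum, hT6val] at XT
  rw [lhs1, ← XT]
  have step2 : ∀ i ∈ rt.index,
      (∑ j ∈ (rtA i).index,
        φ (rt.right i * h) • (act ((rtA i).left j) a * act ((rtA i).right j) b))
      = φ (rt.right i * h) • act (rt.left i) (a * b) := by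
    intro i _
    rw [← Finset.smul_sum]
    congr 1
    rw [hactmul (rt.left i) a b, ← (rtA i).eq, map_sum, map_sum]
    exact (Finset.sum_congr rfl fun j _ => by
      rw [TensorProduct.map_tmul, LinearMap.mul'_apply, LinearMap.flip_apply,
        LinearMap.flip_apply]).symm
  rw [Finset.sum_congr rfl step2, ← act_sum_smul,
    six_b Sbar hS1 hS2 φ t lam hφt hyp hlam h rt rh, act_sum_smul]
  conv_rhs => rw [← rh.eq]
  rw [map_sum, map_sum]
  exact (Finset.sum_congr rfl fun j _ => by
    rw [TensorProduct.map_tmul, TensorProduct.rid_tmul, LinearMap.comp_apply,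
      LinearMap.flip_apply, AlgHom.toLinearMap_apply]).symm

lemma rprime_id (act : H →ₗ[k] A →ₗ[k] A)
    (hact1 : ∀ a : A, act 1 a = a)
    (hact2 : ∀ (g h : H) (a : A), act (g * h) a = act g (act h a))
    (Sbar : H →ₗ[k] H)
    (hS1 : ∀ h : H, Sbar (HopfAlgebra.antipode (R := k) h) = h)
    (hS2 : ∀ h : H, HopfAlgebra.antipode (R := k) (Sbar h) = h)
    (φ : H →ₗ[k] k) (t : H)
    (hfr1 : ∀ h : H, LinearMap.rTensor H (LinearMap.mulLeft k h) (hE Sbar t) =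
      LinearMap.lTensor H (LinearMap.mulRight k h) (hE Sbar t))
    (hfr3 : TensorProduct.rid k H (LinearMap.lTensor H φ (hE Sbar t)) = 1)
    (rt : Coalgebra.Repr k t (H × H)) (x : A ⊗[k] H) :
    ∑ i ∈ rt.index, hMul act ((1:A) ⊗ₜ[k] rt.right i)
      ((hNu φ (hMul act ((1:A) ⊗ₜ[k] Sbar (rt.left i)) x)) ⊗ₜ[k] (1:H)) = x := by
  induction x using TensorProduct.induction_on with
  | zero =>
      simp only [hMul, TensorProduct.tmul_zero, map_zero, TensorProduct.zero_tmul,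
        Finset.sum_const_zero]
  | add u v hu hv =>
      have e : ∀ i ∈ rt.index,
          hMul act ((1:A) ⊗ₜ[k] rt.right i)
            ((hNu φ (hMul act ((1:A) ⊗ₜ[k] Sbar (rt.left i)) (u + v))) ⊗ₜ[k] (1:H))
          = hMul act ((1:A) ⊗ₜ[k] rt.right i)
              ((hNu φ (hMul act ((1:A) ⊗ₜ[k] Sbar (rt.left i)) u)) ⊗ₜ[k] (1:H))
            + hMul act ((1:A) ⊗ₜ[k] rt.right i)
              ((hNu φ (hMul act ((1:A) ⊗ₜ[k] Sbar (rt.left i)) v)) ⊗ₜ[k] (1:H)) := by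
        intro i _
        rw [hMul_right_add, map_add, TensorProduct.add_tmul, hMul_right_add]
      rw [Finset.sum_congr rfl e, Finset.sum_add_distrib, hu, hv]
  | tmul a m =>
      set rC : ∀ i, Coalgebra.Repr k (rt.left i) (H × H) :=
        fun i => Coalgebra.Repr.arbitrary k (rt.left i) with hrC
      set rB : ∀ i, Coalgebra.Repr k (rt.right i) (H × H) :=
        fun i => Coalgebra.Repr.arbitrary k (rt.right i) with hrB
      set rD : ∀ i j, Coalgebra.Repr k ((rB i).left j) (H × H) :=
        fun i j => Coalgebra.Repr.arbitrary k ((rB i).left j) with hrD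
      have step1 : ∀ i ∈ rt.index,
          hMul act ((1:A) ⊗ₜ[k] rt.right i)
            ((hNu φ (hMul act ((1:A) ⊗ₜ[k] Sbar (rt.left i)) (a ⊗ₜ[k] m))) ⊗ₜ[k] (1:H))
          = ∑ j ∈ (rC i).index, ∑ p ∈ (rB i).index,
              φ (Sbar ((rC i).left j) * m) •
                (act ((rB i).left p * Sbar ((rC i).right j)) a ⊗ₜ[k] (rB i).right p) := by
        intro i _
        rw [hMul_tmul act 1 a m
          (⟨(rC i).index, fun j => Sbar ((rC i).right j), fun j => Sbar ((rC i).left j),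
            (sbar_comul Sbar hS1 hS2 (rC i)).symm⟩ : Coalgebra.Repr k (Sbar (rt.left i)) (H × H))]
        rw [map_sum]
        simp only [hNu_tmul, one_mul]
        rw [TensorProduct.sum_tmul]
        simp only [← TensorProduct.smul_tmul']
        rw [hMul_right_sum]
        refine Finset.sum_congr rfl fun j _ => ?_
        rw [hMul_right_smul, hMul_tmul act 1 (act (Sbar ((rC i).right j)) a) 1 (rB i),
          Finset.smul_sum]
        refine Finset.sum_congr rfl fun p _ => ?_
        rw [one_mul, mul_one, hact2]
      rw [Finset.sum_congr rfl step1]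
      set TR : H ⊗[k] (H ⊗[k] (H ⊗[k] H)) →ₗ[k] A ⊗[k] H :=
        (TensorProduct.lid k (A ⊗[k] H)).toLinearMap ∘ₗ
          TensorProduct.map (φ ∘ₗ LinearMap.mulRight k m ∘ₗ Sbar)
            (LinearMap.rTensor H (act.flip a ∘ₗ LinearMap.mul' k H ∘ₗ
                (TensorProduct.comm k H H).toLinearMap ∘ₗ LinearMap.rTensor H Sbar) ∘ₗ
              (TensorProduct.assoc k H H H).symm.toLinearMap) with hTR
      have hTRval : ∀ x y z w : H, TR (x ⊗ₜ[k] (y ⊗ₜ[k] (z ⊗ₜ[k] w)))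
          = φ (Sbar x * m) • (act (z * Sbar y) a ⊗ₜ[k] w) := by
        intro x y z w
        rw [hTR]
        simp only [LinearMap.comp_apply, LinearEquiv.coe_coe, TensorProduct.map_tmul,
          TensorProduct.assoc_symm_tmul, LinearMap.rTensor_tmul, TensorProduct.comm_tmul,
          LinearMap.mul'_apply, LinearMap.flip_apply, TensorProduct.lid_tmul,
          LinearMap.mulRight_apply]
      have key := master4 (k := k) TR rt rC rB rD
      simp only [hTRval] at key
      rw [key]
      have step3 : ∀ i ∈ rt.index, ∀ j ∈ (rB i).index,
          (∑ p ∈ (rD i j).index,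
            φ (Sbar (rt.left i) * m) •
              (act ((rD i j).right p * Sbar ((rD i j).left p)) a ⊗ₜ[k] (rB i).right j))
          = Coalgebra.counit (R := k) ((rB i).left j) •
              (φ (Sbar (rt.left i) * m) • (a ⊗ₜ[k] (rB i).right j)) := by
        intro i _ j _
        rw [← Finset.smul_sum, ← TensorProduct.sum_tmul]
        have e1 : (∑ p ∈ (rD i j).index,
            act ((rD i j).right p * Sbar ((rD i j).left p)) a)
            = Coalgebra.counit (R := k) ((rB i).left j) • a := by
          rw [show (∑ p ∈ (rD i j).index,
              act ((rD i j).right p * Sbar ((rD i j).left p)) a)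
              = act (∑ p ∈ (rD i j).index,
                  (rD i j).right p * Sbar ((rD i j).left p)) a by
            rw [map_sum, LinearMap.sum_apply]]
          rw [sbar_collapse Sbar hS1 hS2 (rD i j), map_smul, LinearMap.smul_apply, hact1]
        rw [e1, ← TensorProduct.smul_tmul', smul_comm]
      rw [Finset.sum_congr rfl (fun i hi => Finset.sum_congr rfl (fun j hj => step3 i hi j hj))]
      have step4 : ∀ i ∈ rt.index,
          (∑ j ∈ (rB i).index, Coalgebra.counit (R := k) ((rB i).left j) •
            (φ (Sbar (rt.left i) * m) • (a ⊗ₜ[k] (rB i).right j)))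
          = φ (Sbar (rt.left i) * m) • (a ⊗ₜ[k] rt.right i) := by
        intro i _
        have e2 : ∀ j ∈ (rB i).index,
            Coalgebra.counit (R := k) ((rB i).left j) •
              (φ (Sbar (rt.left i) * m) • (a ⊗ₜ[k] (rB i).right j))
            = φ (Sbar (rt.left i) * m) •
                (a ⊗ₜ[k] (Coalgebra.counit (R := k) ((rB i).left j) • (rB i).right j)) := by
          intro j _
          rw [TensorProduct.tmul_smul, smul_comm]
        rw [Finset.sum_congr rfl e2, ← Finset.smul_sum, ← TensorProduct.tmul_sum, ccL (rB i)]
      rw [Finset.sum_congr rfl step4]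
      have e3 : ∀ i ∈ rt.index,
          φ (Sbar (rt.left i) * m) • (a ⊗ₜ[k] rt.right i)
          = a ⊗ₜ[k] (φ (Sbar (rt.left i) * m) • rt.right i) := by
        intro i _
        rw [TensorProduct.tmul_smul]
      rw [Finset.sum_congr rfl e3, ← TensorProduct.tmul_sum,
        star_id Sbar φ t rt hfr1 hfr3 m]
end CFMAux
namespace CFMAux
variable {k H A : Type*} [CommRing k] [Ring H] [HopfAlgebra k H]
  [Ring A] [Algebra k A]
open Coalgebra LinearMap TensorProduct

set_option maxHeartbeats 1600000
set_option synthInstance.maxHeartbeats 1000000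

lemma hMul_oneH_sum_smul (act : H →ₗ[k] A →ₗ[k] A) {ι : Type*} (s : Finset ι)
    (c : ι → k) (g : ι → H) (y : A ⊗[k] H) :
    hMul act ((1:A) ⊗ₜ[k] (∑ i ∈ s, c i • g i)) y
      = ∑ i ∈ s, c i • hMul act ((1:A) ⊗ₜ[k] g i) y := by
  simp only [hMul, TensorProduct.tmul_sum, TensorProduct.tmul_smul,
    TensorProduct.sum_tmul, ← TensorProduct.smul_tmul', map_sum, map_smul]

lemma alpha_hMul (act : H →ₗ[k] A →ₗ[k] A) (t : H) (rt : Coalgebra.Repr k t (H × H)) (c : A) :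
    LinearMap.rTensor H (act.flip c) (Coalgebra.comul t)
      = hMul act ((1:A) ⊗ₜ[k] t) (c ⊗ₜ[k] (1:H)) := by
  rw [hMul_tmul act 1 c 1 rt, ← rt.eq, map_sum]
  simp only [LinearMap.rTensor_tmul, LinearMap.flip_apply, one_mul, mul_one]

end CFMAux

open CFMAux in
set_option maxHeartbeats 1600000 in
set_option synthInstance.maxHeartbeats 1000000 in
theorem cfm_morita_context'
    (Sbar : H →ₗ[k] H)
    (hS1 : ∀ h : H, Sbar (HopfAlgebra.antipode (R := k) h) = h)
    (hS2 : ∀ h : H, HopfAlgebra.antipode (R := k) (Sbar h) = h)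
    (t : H) (ht : ∀ h : H, h * t = (Coalgebra.counit (R := k) h) • t)
    (φ : H →ₗ[k] k)
    (hφ : ∀ h : H, TensorProduct.rid k H
      (LinearMap.lTensor H φ (Coalgebra.comul h)) = φ h • (1 : H))
    (hφt : φ t = 1)
    (hfr1 : ∀ h : H, LinearMap.rTensor H (LinearMap.mulLeft k h) (hE Sbar t) =
      LinearMap.lTensor H (LinearMap.mulRight k h) (hE Sbar t))
    (hfr2 : TensorProduct.lid k H (LinearMap.rTensor H φ (hE Sbar t)) = 1)
    (hfr3 : TensorProduct.rid k H (LinearMap.lTensor H φ (hE Sbar t)) = 1)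
    (act : H →ₗ[k] A →ₗ[k] A)
    (hact1 : ∀ a : A, act 1 a = a)
    (hact2 : ∀ (g h : H) (a : A), act (g * h) a = act g (act h a))
    (hactmul : ∀ (h : H) (a b : A), act h (a * b) =
      LinearMap.mul' k A (TensorProduct.map (act.flip a) (act.flip b) (Coalgebra.comul h)))
    (hactone : ∀ h : H, act h (1 : A) = (Coalgebra.counit (R := k) h) • (1 : A))
    (lam : H →ₐ[k] k) (hlam : ∀ h : H, t * h = lam h • t)
    (Q : Set (A ⊗[k] H))
    (hQ : Q = {q : A ⊗[k] H | ∀ h : H,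
      hMul act (((1 : A) ⊗ₜ[k] h)) q = (Coalgebra.counit (R := k) h) • q})
    (α : A → A ⊗[k] H)
    (hα : ∀ a : A, α a = LinearMap.rTensor H (act.flip a) (Coalgebra.comul t)) :
    (∀ a : A, α a ∈ Q) ∧
    (∀ a : A, hNu φ (α a) = a) ∧
    (∀ q ∈ Q, α (hNu φ q) = q) ∧
    (∀ a a' : A, α a = α a' → a = a') ∧
    (∀ q ∈ Q, ∃ a : A, α a = q) ∧
    (∀ (a b : A) (h : H),
      hNu φ (hMul act (α a) (b ⊗ₜ[k] h)) =
        TensorProduct.rid k A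
          (TensorProduct.map (act.flip (a * b) ∘ₗ Sbar) lam.toLinearMap
            (Coalgebra.comul h))) := by
  have part2' : ∀ a : A, hNu φ (α a) = a := by
    intro a
    rw [hα]
    exact part2 act hact1 φ t hφt (hφ t) a
  have part3' : ∀ q ∈ Q, α (hNu φ q) = q := by
    intro q hq
    rw [hQ] at hq
    set rt := Coalgebra.Repr.arbitrary k t with hrt
    have R := rprime_id act hact1 hact2 Sbar hS1 hS2 φ t hfr1 hfr3 rt q
    have e1 : ∀ i ∈ rt.index,
        hMul act ((1:A) ⊗ₜ[k] rt.right i)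
          ((hNu φ (hMul act ((1:A) ⊗ₜ[k] Sbar (rt.left i)) q)) ⊗ₜ[k] (1:H))
        = Coalgebra.counit (R := k) (rt.left i) •
            hMul act ((1:A) ⊗ₜ[k] rt.right i) ((hNu φ q) ⊗ₜ[k] (1:H)) := by
      intro i _
      rw [hq (Sbar (rt.left i)), counit_sbar Sbar hS2, map_smul,
        ← TensorProduct.smul_tmul', hMul_right_smul]
    rw [Finset.sum_congr rfl e1, ← hMul_oneH_sum_smul, ccL rt] at R
    rw [hα, alpha_hMul act t rt, R]
  refine ⟨?_, part2', part3', ?_, ?_, ?_⟩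
  · intro a
    rw [hQ]
    intro h
    rw [hα]
    exact part1 act hact2 h (ht h) a
  · intro a a' e
    rw [← part2' a, ← part2' a', e]
  · intro q hq
    exact ⟨hNu φ q, part3' q hq⟩
  · intro a b h
    rw [hα]
    exact part6 act hactmul Sbar hS1 hS2 φ t lam hφt (hφ t) hlam a b h

/-- The CFM bimodule map `α : A → A # H`, `α(a) = (t₁ · a) # t₂`, is a bijection
of `A` onto `Q = {q | (1 # h) q = ε(h) q}` with inverse the restriction of `ν̄`,
and transports the right `A # H`-action into the Cohen–Fischman–Montgomery action
`a ↼ (b # h) = λ(h₂) S̄(h₁) · (ab)`. -/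
theorem cfm_morita_context
    (Sbar : H →ₗ[k] H)
    (hS1 : ∀ h : H, Sbar (HopfAlgebra.antipode (R := k) h) = h)
    (hS2 : ∀ h : H, HopfAlgebra.antipode (R := k) (Sbar h) = h)
    (t : H) (ht : ∀ h : H, h * t = (Coalgebra.counit (R := k) h) • t)
    (φ : H →ₗ[k] k)
    (hφ : ∀ h : H, TensorProduct.rid k H
      (LinearMap.lTensor H φ (Coalgebra.comul h)) = φ h • (1 : H))
    (hφt : φ t = 1)
    (hfr1 : ∀ h : H, LinearMap.rTensor H (LinearMap.mulLeft k h) (hE Sbar t) =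
      LinearMap.lTensor H (LinearMap.mulRight k h) (hE Sbar t))
    (hfr2 : TensorProduct.lid k H (LinearMap.rTensor H φ (hE Sbar t)) = 1)
    (hfr3 : TensorProduct.rid k H (LinearMap.lTensor H φ (hE Sbar t)) = 1)
    -- A is a left H-module algebra
    (act : H →ₗ[k] A →ₗ[k] A)
    (hact1 : ∀ a : A, act 1 a = a)
    (hact2 : ∀ (g h : H) (a : A), act (g * h) a = act g (act h a))
    (hactmul : ∀ (h : H) (a b : A), act h (a * b) =
      LinearMap.mul' k A (TensorProduct.map (act.flip a) (act.flip b) (Coalgebra.comul h)))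
    (hactone : ∀ h : H, act h (1 : A) = (Coalgebra.counit (R := k) h) • (1 : A))
    -- the distinguished algebra map λ : t h = λ(h) t
    (lam : H →ₐ[k] k) (hlam : ∀ h : H, t * h = lam h • t)
    -- Q = {q ∈ A # H | (1 # h) q = ε(h) q for all h}
    (Q : Set (A ⊗[k] H))
    (hQ : Q = {q : A ⊗[k] H | ∀ h : H,
      hMul act (((1 : A) ⊗ₜ[k] h)) q = (Coalgebra.counit (R := k) h) • q})
    -- α(a) = (t₁ · a) # t₂
    (α : A → A ⊗[k] H)
    (hα : ∀ a : A, α a = LinearMap.rTensor H (act.flip a) (Coalgebra.comul t)) :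
    -- α takes values in Q
    (∀ a : A, α a ∈ Q) ∧
    -- ν̄ ∘ α = id
    (∀ a : A, hNu φ (α a) = a) ∧
    -- α ∘ ν̄ = id on Q
    (∀ q ∈ Q, α (hNu φ q) = q) ∧
    -- hence α : A → Q is a bijection
    (∀ a a' : A, α a = α a' → a = a') ∧
    (∀ q ∈ Q, ∃ a : A, α a = q) ∧
    -- the transported action is the CFM action : ν̄(α(a)(b # h)) = λ(h₂) S̄(h₁)·(ab)
    (∀ (a b : A) (h : H),
      hNu φ (hMul act (α a) (b ⊗ₜ[k] h)) =
        TensorProduct.rid k A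
          (TensorProduct.map (act.flip (a * b) ∘ₗ Sbar) lam.toLinearMap
            (Coalgebra.comul h))) :=
  cfm_morita_context' Sbar hS1 hS2 t ht φ hφ hφt hfr1 hfr2 hfr3 act hact1 hact2
    hactmul hactone lam hlam Q hQ α hα

end
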